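/- arXiv:2107.09943 — 2 statements merged into one kernel-verified Lean document; each statement's English description precedes it below -/
import Mathlib

section
/- For the superpotential W = aX + dXPQ + ξX²A + σPA² with a ≠ 0 and d ≠ 0, every solution of the F-term equations has P ≠ 0 and Q ≠ 0; in particular the U(1) R-symmetry acting with charges (2,6,-6,-2) on (X,P,Q,A) is spontaneously broken at every such solution. -/
/-- The superpotential W = aX + dXPQ + ξX²A + σPA². -/
noncomputable def W (a d ξ σ : ℂ) (X P Q A : ℂ) : ℂ :=
  a * X + d * X * P * Q + ξ * X ^ 2 * A + σ * P * A ^ 2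

/-- For W = aX + dXPQ + ξX²A + σPA² with a ≠ 0 and d ≠ 0, every solution of the
F-term equations has P ≠ 0 and Q ≠ 0, so the R-symmetry with charges (2,6,-6,-2)
is spontaneously broken at every such solution. -/
theorem R_symmetry_broken (a d ξ σ : ℂ) (ha : a ≠ 0) (hd : d ≠ 0) (X P Q A : ℂ)
    (h1 : deriv (fun X' => W a d ξ σ X' P Q A) X = 0)
    (h2 : deriv (fun P' => W a d ξ σ X P' Q A) P = 0)
    (h3 : deriv (fun Q' => W a d ξ σ X P Q' A) Q = 0)
    (h4 : deriv (fun A' => W a d ξ σ X P Q A') A = 0) :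
    P ≠ 0 ∧ Q ≠ 0 := by
  have e1 : deriv (fun X' => W a d ξ σ X' P Q A) X = a + d*P*Q + 2*ξ*X*A := by
    have h := ((((hasDerivAt_id X).const_mul a).add
        ((((hasDerivAt_id X).const_mul d).mul_const P).mul_const Q)).add
        (((hasDerivAt_pow 2 X).const_mul ξ).mul_const A)).add
        (hasDerivAt_const X (σ*P*A^2))
    simpa [W, Pi.add_def] using h.deriv.trans (show _ = a + d*P*Q + 2*ξ*X*A by push_cast; ring)
  have e3 : deriv (fun Q' => W a d ξ σ X P Q' A) Q = d*X*P := by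
    have h := (((hasDerivAt_const Q (a*X)).add
        (((hasDerivAt_id Q).const_mul (d*X*P)))).add
        (hasDerivAt_const Q (ξ*X^2*A))).add
        (hasDerivAt_const Q (σ*P*A^2))
    have h2 : HasDerivAt (fun Q' => W a d ξ σ X P Q' A) (d*X*P) Q := by
      convert h using 1
      · rfl
      · rfl
      · ext Q'; simp only [W, Pi.add_apply, id]
      · ring
    exact h2.deriv
  have e4 : deriv (fun A' => W a d ξ σ X P Q A') A = ξ*X^2 + 2*σ*P*A := by
    have h := (((hasDerivAt_const A (a*X + d*X*P*Q)).add
        (((hasDerivAt_id A).const_mul (ξ*X^2)))).add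
        (((hasDerivAt_pow 2 A).const_mul (σ*P))))
    have h2 : HasDerivAt (fun A' => W a d ξ σ X P Q A') (ξ*X^2 + 2*σ*P*A) A := by
      convert h using 1
      · rfl
      · rfl
      · ext A'; simp only [W, Pi.add_apply, id]
      · push_cast; ring
    exact h2.deriv
  rw [e1] at h1
  rw [e3] at h3
  rw [e4] at h4
  -- From h3: X = 0 or P = 0
  have hXP : X = 0 ∨ P = 0 := by
    rcases mul_eq_zero.mp h3 with h | h
    · rcases mul_eq_zero.mp h with h' | h'
      · exact absurd h' hd
      · exact Or.inl h'
    · exact Or.inr h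
  rcases hXP with hX | hP
  · -- X = 0: h1 gives a + d P Q = 0, so P ≠ 0 and Q ≠ 0
    subst hX
    have hPQ : d * P * Q = -a := by linear_combination h1
    constructor
    · intro h; subst h; apply ha; linear_combination hPQ
    · intro h; subst h; apply ha; linear_combination hPQ
  · -- P = 0: h4 gives ξ X² = 0; h1 gives a + 2ξXA = 0
    exfalso
    subst hP
    apply ha
    have h4' : ξ * X ^ 2 = 0 := by linear_combination h4
    rcases mul_eq_zero.mp h4' with hξ | hX2
    · linear_combination h1 + (-2*X*A) * hξ
    · have hX : X = 0 := by
        exact sq_eq_zero_iff.mp (by rw [sq, ← pow_two]; exact hX2)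
      linear_combination h1 + (-2*ξ*A) * hX
end

section
/- For the superpotential W = aX + dXPQ + ξX²A + σPA² with a ≠ 0, d ≠ 0, ξ ≠ 0, σ ≠ 0, the solution set of the F-term equations is exactly { (0, P, -a/(dP), 0) : P ∈ ℂ, P ≠ 0 }, a one-complex-dimensional family. -/
lemma derivX (a d ξ σ X P Q A : ℂ) :
    deriv (fun X' => W a d ξ σ X' P Q A) X = a + d * P * Q + 2 * ξ * X * A := by
  have h : HasDerivAt (fun X' => W a d ξ σ X' P Q A) (a + d * P * Q + 2 * ξ * X * A) X := by
    unfold W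
    have := ((((hasDerivAt_id X).const_mul a).add
      ((((hasDerivAt_id X).const_mul d).mul_const P).mul_const Q)).add
      ((((hasDerivAt_id X).pow 2).const_mul ξ).mul_const A)).add
      (hasDerivAt_const X (σ * P * A ^ 2))
    convert this using 1
    all_goals first | ((try funext x); (try simp only [id_eq, Pi.add_apply, Pi.pow_apply]); ring) | rfl
  exact h.deriv

lemma derivP (a d ξ σ X P Q A : ℂ) :
    deriv (fun P' => W a d ξ σ X P' Q A) P = d * X * Q + σ * A ^ 2 := by
  have h : HasDerivAt (fun P' => W a d ξ σ X P' Q A) (d * X * Q + σ * A ^ 2) P := by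
    unfold W
    have := ((hasDerivAt_const P (a * X)).add
      (((hasDerivAt_id P).const_mul (d * X)).mul_const Q)).add
      (((hasDerivAt_const P (ξ * X ^ 2 * A))).add
        (((hasDerivAt_id P).const_mul σ).mul_const (A ^ 2)))
    convert this using 1
    all_goals first | ((try funext x); (try simp only [id_eq, Pi.add_apply, Pi.pow_apply]); ring) | rfl
  exact h.deriv

lemma derivQ (a d ξ σ X P Q A : ℂ) :
    deriv (fun Q' => W a d ξ σ X P Q' A) Q = d * X * P := by
  have h : HasDerivAt (fun Q' => W a d ξ σ X P Q' A) (d * X * P) Q := by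
    unfold W
    have := ((hasDerivAt_const Q (a * X)).add
      ((hasDerivAt_id Q).const_mul (d * X * P))).add
      (hasDerivAt_const Q (ξ * X ^ 2 * A + σ * P * A ^ 2))
    convert this using 1
    all_goals first | ((try funext x); (try simp only [id_eq, Pi.add_apply, Pi.pow_apply]); ring) | rfl
  exact h.deriv

lemma derivA (a d ξ σ X P Q A : ℂ) :
    deriv (fun A' => W a d ξ σ X P Q A') A = ξ * X ^ 2 + 2 * σ * P * A := by
  have h : HasDerivAt (fun A' => W a d ξ σ X P Q A') (ξ * X ^ 2 + 2 * σ * P * A) A := by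
    unfold W
    have := ((hasDerivAt_const A (a * X + d * X * P * Q)).add
      ((hasDerivAt_id A).const_mul (ξ * X ^ 2))).add
      (((hasDerivAt_id A).pow 2).const_mul (σ * P))
    convert this using 1
    all_goals first | ((try funext x); (try simp only [id_eq, Pi.add_apply, Pi.pow_apply]); ring) | rfl
  exact h.deriv

/-- For W = aX + dXPQ + ξX²A + σPA² with all coefficients nonzero, the solution set of
the F-term equations is exactly { (0, P, -a/(dP), 0) : P ∈ ℂ, P ≠ 0 }. -/
theorem fterm_solution_set (a d ξ σ : ℂ) (ha : a ≠ 0) (hd : d ≠ 0) (hξ : ξ ≠ 0)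
    (hσ : σ ≠ 0) (X P Q A : ℂ) :
    (deriv (fun X' => W a d ξ σ X' P Q A) X = 0 ∧
     deriv (fun P' => W a d ξ σ X P' Q A) P = 0 ∧
     deriv (fun Q' => W a d ξ σ X P Q' A) Q = 0 ∧
     deriv (fun A' => W a d ξ σ X P Q A') A = 0) ↔
    (X = 0 ∧ A = 0 ∧ P ≠ 0 ∧ Q = -a / (d * P)) := by
  rw [derivX, derivP, derivQ, derivA]
  constructor
  · rintro ⟨h1, h2, h3, h4⟩
    have hX : X = 0 := by
      by_contra hX
      have hP : P = 0 := by
        rcases mul_eq_zero.mp h3 with h | h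
        · rcases mul_eq_zero.mp h with h | h
          · exact absurd h hd
          · exact absurd h hX
        · exact h
      have : ξ * X ^ 2 = 0 := by
        have := h4; rw [hP] at this; linear_combination this
      rcases mul_eq_zero.mp this with h | h
      · exact hξ h
      · exact hX (pow_eq_zero_iff (two_ne_zero) |>.mp h)
    subst hX
    have hA : A = 0 := by
      have hA2 : σ * A ^ 2 = 0 := by linear_combination h2
      rcases mul_eq_zero.mp hA2 with h | h
      · exact absurd h hσ
      · exact pow_eq_zero_iff (two_ne_zero) |>.mp h
    subst hA
    have h1' : a + d * P * Q = 0 := by linear_combination h1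
    have hP : P ≠ 0 := by
      intro hP; rw [hP] at h1'
      exact ha (by linear_combination h1')
    refine ⟨rfl, rfl, hP, ?_⟩
    field_simp
    linear_combination h1'
  · rintro ⟨hX, hA, hP, hQ⟩
    subst hX; subst hA; subst hQ
    refine ⟨?_, by ring, by ring, by ring⟩
    field_simp; ring
end
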